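/- Let F ⊆ ℓ∞(ℤ) be a shift-invariant concrete predual of ℓ₁(ℤ) and let λ ∈ ℂ with |λ| = 1. Then λδ₀ is not a weak*-limit point of the point masses: λδ₀ does not belong to the σ(ℓ₁(ℤ),F)-closure of the set {δ_n : n ∈ ℤ, n ≠ 0}. -/

import Mathlib

open scoped ENNReal
open Filter Topology

noncomputable section

/-- `ℓ₁(ℤ)`, the complex Banach space of absolutely summable bilateral sequences. -/
abbrev ellOne : Type := lp (fun _ : ℤ => ℂ) 1

/-- `ℓ∞(ℤ)`, the complex Banach space of bounded bilateral sequences. -/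
abbrev ellInf : Type := lp (fun _ : ℤ => ℂ) ∞

lemma memℓp_zshift (m : ℤ) (x : ellInf) : Memℓp (fun n : ℤ => x (n - m)) ∞ := by
  have hx := memℓp_infty_iff.1 (lp.memℓp x)
  refine memℓp_infty (hx.mono ?_)
  rintro r ⟨n, rfl⟩
  exact ⟨n - m, rfl⟩

/-- translation by `m` on `ℓ∞(ℤ)`: `(zshift m x) n = x (n - m)`.  In particular `zshift 1` is
the bilateral shift `σ`, with `σ(x)(n) = x (n - 1)`, and `zshift m = σ^m`. -/
def zshift (m : ℤ) (x : ellInf) : ellInf := ⟨fun n => x (n - m), memℓp_zshift m x⟩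

/-- `F ⊆ ℓ∞(ℤ)` is a concrete predual of `ℓ₁(ℤ)`: a closed subspace such that the canonical
map `ι_F : ℓ₁(ℤ) → F*`, `⟨ι_F a, x⟩ = ∑_n x(n) a(n)`, is an isomorphism of Banach spaces
(a bounded linear bijection with bounded inverse, not necessarily isometric). -/
def IsConcretePredual (F : Submodule ℂ ellInf) : Prop :=
  IsClosed (F : Set ellInf) ∧
  ∃ e : ellOne ≃L[ℂ] StrongDual ℂ F,
    ∀ (a : ellOne) (x : F), e a x = ∑' n : ℤ, (x : ellInf) n * a n

/-- The weak* topology `σ(ℓ₁(ℤ), F)` on `ℓ₁(ℤ)` induced by a subspace `F ⊆ ℓ∞(ℤ)`: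
the coarsest topology making `a ↦ ∑_n x(n) a(n)` continuous for every `x ∈ F`. -/
def weakStar (F : Submodule ℂ ellInf) : TopologicalSpace ellOne :=
  ⨅ x ∈ F, TopologicalSpace.induced (fun a : ellOne => ∑' n : ℤ, x n * a n) inferInstance

/-- the point mass `δ_t ∈ ℓ₁(ℤ)`. -/
def deltaZ (t : ℤ) : ellOne := lp.single 1 t 1

/-! ### auxiliary lemmas -/

lemma zshift_apply (m : ℤ) (x : ellInf) (n : ℤ) : zshift m x n = x (n - m) := rfl

lemma zshift_zshift (a b : ℤ) (x : ellInf) : zshift a (zshift b x) = zshift (a + b) x := by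
  apply lp.ext
  funext n
  show x (n - a - b) = x (n - (a + b))
  exact congrArg (⇑x) (by ring)

lemma zshift_zero' (x : ellInf) : zshift 0 x = x := by
  apply lp.ext
  funext n
  show x (n - 0) = x n
  exact congrArg (⇑x) (by ring)

lemma zshift_add' (m : ℤ) (x y : ellInf) : zshift m (x + y) = zshift m x + zshift m y := by
  apply lp.ext
  funext n
  show (x + y) (n - m) = _
  simp [lp.coeFn_add, Pi.add_apply]
  rfl

lemma zshift_smul' (m : ℤ) (c : ℂ) (x : ellInf) : zshift m (c • x) = c • zshift m x := by
  apply lp.ext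
  funext n
  show (c • x) (n - m) = (c • zshift m x) n
  rw [lp.coeFn_smul, lp.coeFn_smul]
  rfl

lemma norm_zshift (m : ℤ) (x : ellInf) : ‖zshift m x‖ = ‖x‖ := by
  rw [lp.norm_eq_ciSup, lp.norm_eq_ciSup]
  rw [iSup, iSup]
  congr 1
  ext r
  constructor
  · rintro ⟨n, rfl⟩
    exact ⟨n - m, rfl⟩
  · rintro ⟨n, rfl⟩
    refine ⟨n + m, ?_⟩
    show ‖x (n + m - m)‖ = ‖x n‖
    rw [add_sub_cancel_right]

lemma deltaZ_apply_self (t : ℤ) : (deltaZ t) t = 1 := lp.single_apply_self 1 t 1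

lemma deltaZ_apply_ne {t n : ℤ} (h : n ≠ t) : (deltaZ t) n = 0 := lp.single_apply_ne 1 t 1 h

lemma norm_deltaZ (t : ℤ) : ‖deltaZ t‖ = 1 := by
  have := lp.norm_single (p := (1 : ℝ≥0∞)) (E := fun _ : ℤ => ℂ) (by norm_num)
    t (1 : ℂ)
  simpa [deltaZ] using this

/-- abbreviation for singletons in `ℓ₁(ℤ)`. -/
def sing (i : ℤ) (c : ℂ) : ellOne := lp.single 1 i c

lemma lp_single_sub (i : ℤ) (c c' : ℂ) :
    sing i c - sing i c' = sing i (c - c') := by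
  apply lp.ext
  funext j
  have h1 : (sing i c - sing i c') j = sing i c j - sing i c' j := by
    rw [lp.coeFn_sub]
    rfl
  rw [h1]
  unfold sing
  rcases eq_or_ne j i with rfl | hj
  · simp [lp.single_apply_self]
  · simp [lp.single_apply_ne _ _ _ hj]

lemma isometry_single (i : ℤ) : Isometry (fun c : ℂ => sing i c) := by
  intro c c'
  rw [edist_dist, edist_dist, dist_eq_norm, dist_eq_norm, lp_single_sub]
  congr 1
  have := lp.norm_single (p := (1 : ℝ≥0∞)) (E := fun _ : ℤ => ℂ) (by norm_num)
    i (c - c')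
  simpa [sing] using this

lemma separableSpace_ellOne : TopologicalSpace.SeparableSpace ellOne := by
  haveI : Fact ((1 : ℝ≥0∞) ≤ 1) := ⟨le_refl _⟩
  set T : Set ellOne :=
    ⋃ s : Finset ℤ, Set.range (fun v : ℤ → ℂ => ∑ i ∈ s, sing i (v i)) with hT
  have key : ∀ f : ellOne, f ∈ closure T := by
    intro f
    have hs := lp.hasSum_single (E := fun _ : ℤ => ℂ) (p := 1) (by norm_num) f
    refine mem_closure_of_tendsto hs (Filter.Eventually.of_forall ?_)
    intro s
    exact Set.mem_iUnion.2 ⟨s, ⟨fun i => f i, rfl⟩⟩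
  have h1 : TopologicalSpace.IsSeparable T := by
    refine TopologicalSpace.IsSeparable.iUnion fun s => TopologicalSpace.isSeparable_range ?_
    refine continuous_finset_sum s fun i _ => ?_
    exact (isometry_single i).continuous.comp (continuous_apply i)
  have h2 : TopologicalSpace.IsSeparable (Set.univ : Set ellOne) := by
    refine TopologicalSpace.IsSeparable.mono ?_ (fun f _ => key f)
    exact h1.closure
  exact TopologicalSpace.isSeparable_univ_iff.1 h2

section Shifts

variable {F : Submodule ℂ ellInf}

lemma zshift_image_all (hinv : zshift 1 '' (F : Set ellInf) = F) :
    ∀ k : ℤ, zshift k '' (F : Set ellInf) = F := by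
  have comp : ∀ (a : ℤ), zshift a '' (zshift 1 '' (F : Set ellInf)) =
      zshift (a + 1) '' (F : Set ellInf) := by
    intro a
    rw [Set.image_image]
    apply congrFun
    apply congrArg
    funext x
    rw [zshift_zshift]
  intro k
  induction k using Int.induction_on with
  | zero =>
    ext x
    constructor
    · rintro ⟨y, hy, rfl⟩
      rwa [zshift_zero']
    · intro hx
      exact ⟨x, hx, zshift_zero' x⟩
  | succ i ih =>
    have := comp i
    rw [hinv] at this
    rw [← this, ih]
  | pred i ih =>
    have h2 : (-(i : ℤ) - 1) + 1 = -(i : ℤ) := by ring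
    calc zshift (-(i : ℤ) - 1) '' (F : Set ellInf)
        = zshift (-(i : ℤ) - 1) '' (zshift 1 '' (F : Set ellInf)) := by rw [hinv]
      _ = zshift ((-(i : ℤ) - 1) + 1) '' (F : Set ellInf) := comp _
      _ = zshift (-(i : ℤ)) '' (F : Set ellInf) := by rw [h2]
      _ = F := ih

lemma zshift_mem (hinv : zshift 1 '' (F : Set ellInf) = F) (k : ℤ) {x : ellInf}
    (hx : x ∈ F) : zshift k x ∈ F := by
  have h := zshift_image_all hinv k
  show zshift k x ∈ (F : Set ellInf)
  rw [← h]
  exact ⟨x, hx, rfl⟩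

/-- the shift on `F`, as a continuous linear map. -/
def shiftF (hinv : zshift 1 '' (F : Set ellInf) = F) (k : ℤ) : F →L[ℂ] F :=
  LinearMap.mkContinuous
    { toFun := fun x => ⟨zshift k ↑x, zshift_mem hinv k x.2⟩
      map_add' := fun x y => by
        apply Subtype.ext
        exact zshift_add' k ↑x ↑y
      map_smul' := fun c x => by
        apply Subtype.ext
        exact zshift_smul' k c ↑x }
    1 (fun x => by
      simp only [LinearMap.coe_mk, AddHom.coe_mk, one_mul]
      show ‖zshift k ↑x‖ ≤ ‖(x : ellInf)‖
      rw [norm_zshift])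

lemma shiftF_apply (hinv : zshift 1 '' (F : Set ellInf) = F) (k : ℤ) (x : F) :
    ((shiftF hinv k x : F) : ellInf) = zshift k ↑x := rfl

lemma shiftF_comp (hinv : zshift 1 '' (F : Set ellInf) = F) (k : ℤ) (x : F) :
    shiftF hinv k (shiftF hinv (-k) x) = x := by
  apply Subtype.ext
  rw [shiftF_apply, shiftF_apply, zshift_zshift]
  have : k + -k = 0 := by ring
  rw [this, zshift_zero']

lemma norm_shiftF_le (hinv : zshift 1 '' (F : Set ellInf) = F) (k : ℤ) :
    ‖shiftF hinv k‖ ≤ 1 :=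
  LinearMap.mkContinuous_norm_le _ zero_le_one _

end Shifts

section Predual

variable {F : Submodule ℂ ellInf}

lemma e_deltaZ (e : ellOne ≃L[ℂ] StrongDual ℂ F)
    (he : ∀ (a : ellOne) (x : F), e a x = ∑' n : ℤ, (x : ellInf) n * a n)
    (n : ℤ) (x : F) : e (deltaZ n) x = (x : ellInf) n := by
  rw [he]
  have h0 : ∀ m : ℤ, m ≠ n → (x : ellInf) m * (deltaZ n) m = 0 := fun m hm => by
    rw [deltaZ_apply_ne hm, mul_zero]
  calc ∑' m, (x : ellInf) m * (deltaZ n) m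
      = (x : ellInf) n * (deltaZ n) n := tsum_eq_single n h0
    _ = (x : ellInf) n := by rw [deltaZ_apply_self, mul_one]

lemma weakStar_eq_induced (e : ellOne ≃L[ℂ] StrongDual ℂ F)
    (he : ∀ (a : ellOne) (x : F), e a x = ∑' n : ℤ, (x : ellInf) n * a n) :
    weakStar F = TopologicalSpace.induced
      (fun a : ellOne => StrongDual.toWeakDual (e a)) inferInstance := by
  have h1 : (inferInstance : TopologicalSpace (WeakDual ℂ F)) =
      TopologicalSpace.induced (fun (ψ : WeakDual ℂ F) (y : F) => ψ y)
        Pi.topologicalSpace := rfl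
  rw [h1, induced_compose]
  have h2 : (Pi.topologicalSpace : TopologicalSpace (F → ℂ)) =
      ⨅ y : F, TopologicalSpace.induced (fun f : F → ℂ => f y) inferInstance := rfl
  rw [h2, induced_iInf]
  simp only [induced_compose]
  unfold weakStar
  rw [iInf_subtype']
  refine iInf_congr fun y => ?_
  show TopologicalSpace.induced (fun a : ellOne => ∑' n : ℤ, (y : ellInf) n * a n)
        inferInstance
      = TopologicalSpace.induced (fun a : ellOne => (e a) y) inferInstance
  have hfun : (fun a : ellOne => (e a) y)
      = fun a : ellOne => ∑' n : ℤ, (y : ellInf) n * a n := funext fun a => he a y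
  rw [hfun]

end Predual

section Baire

variable {G : Type} [NormedAddCommGroup G] [NormedSpace ℂ G]

/-- Baire-category fragmentation: a weak-* compact set in the dual of a space with
norm-separable dual has a relatively weak-*-open piece of small norm-diameter. -/
lemma exists_small_piece (c : ℕ → StrongDual ℂ G) (hc : DenseRange c)
    {K : Set (WeakDual ℂ G)} (hK : IsCompact K) (hne : K.Nonempty) {ε : ℝ} (hε : 0 < ε) :
    ∃ V : Set (WeakDual ℂ G), IsOpen V ∧ (V ∩ K).Nonempty ∧
      ∀ φ ∈ V ∩ K, ∀ φ' ∈ V ∩ K,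
        ‖WeakDual.toStrongDual φ - WeakDual.toStrongDual φ'‖ ≤ 2 * ε := by
  haveI : CompactSpace K := isCompact_iff_compactSpace.mp hK
  haveI : Nonempty K := hne.to_subtype
  set f : ℕ → Set K :=
    fun i => (Subtype.val) ⁻¹' (WeakDual.toStrongDual ⁻¹' Metric.closedBall (c i) ε) with hf
  have hclosed : ∀ i, IsClosed (f i) :=
    fun i => (WeakDual.isClosed_closedBall (c i) ε).preimage continuous_subtype_val
  have hcover : ⋃ i, f i = Set.univ := by
    ext ψ
    simp only [Set.mem_iUnion, Set.mem_univ, iff_true]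
    have hcl : WeakDual.toStrongDual ψ.val ∈ closure (Set.range c) := hc _
    obtain ⟨b, ⟨i, rfl⟩, hb⟩ := Metric.mem_closure_iff.1 hcl ε hε
    exact ⟨i, le_of_lt hb⟩
  obtain ⟨i₀, p, hp⟩ := nonempty_interior_of_iUnion_of_closed hclosed hcover
  have hop : IsOpen (interior (f i₀)) := isOpen_interior
  rw [isOpen_induced_iff] at hop
  obtain ⟨V, hVopen, hV⟩ := hop
  refine ⟨V, hVopen, ?_, ?_⟩
  · refine ⟨p.val, ?_, p.2⟩
    have : p ∈ Subtype.val ⁻¹' V := by rw [hV]; exact hp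
    exact this
  · intro φ hφ φ' hφ'
    have h1 : (⟨φ, hφ.2⟩ : K) ∈ interior (f i₀) := by rw [← hV]; exact hφ.1
    have h2 : (⟨φ', hφ'.2⟩ : K) ∈ interior (f i₀) := by rw [← hV]; exact hφ'.1
    have m1 : (⟨φ, hφ.2⟩ : K) ∈ f i₀ := interior_subset h1
    have m2 : (⟨φ', hφ'.2⟩ : K) ∈ f i₀ := interior_subset h2
    have d1 : dist (WeakDual.toStrongDual φ) (c i₀) ≤ ε := m1
    have d2 : dist (WeakDual.toStrongDual φ') (c i₀) ≤ ε := m2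
    have := dist_triangle (WeakDual.toStrongDual φ) (c i₀) (WeakDual.toStrongDual φ')
    rw [← dist_eq_norm]
    rw [dist_comm] at d2
    calc dist (WeakDual.toStrongDual φ) (WeakDual.toStrongDual φ')
        ≤ dist (WeakDual.toStrongDual φ) (c i₀) + dist (c i₀) (WeakDual.toStrongDual φ') :=
          dist_triangle _ _ _
      _ ≤ ε + ε := add_le_add d1 d2
      _ = 2 * ε := by ring

end Baire

section OpNorms

variable {G : Type} [NormedAddCommGroup G] [NormedSpace ℂ G]

/-- operator norm of the inverse of `e`. -/
def symmNorm (e : ellOne ≃L[ℂ] StrongDual ℂ G) : ℝ :=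
  ‖(e.symm : StrongDual ℂ G →L[ℂ] ellOne)‖

lemma symmNorm_nonneg (e : ellOne ≃L[ℂ] StrongDual ℂ G) : 0 ≤ symmNorm e :=
  norm_nonneg (e.symm : StrongDual ℂ G →L[ℂ] ellOne)

lemma le_symmNorm (e : ellOne ≃L[ℂ] StrongDual ℂ G) (x : StrongDual ℂ G) :
    ‖e.symm.toContinuousLinearMap x‖ ≤ symmNorm e * ‖x‖ :=
  ContinuousLinearMap.le_opNorm _ x

/-- operator norm of `e`. -/
def fwdNorm (e : ellOne ≃L[ℂ] StrongDual ℂ G) : ℝ :=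
  ‖(e : ellOne →L[ℂ] StrongDual ℂ G)‖

lemma le_fwdNorm (e : ellOne ≃L[ℂ] StrongDual ℂ G) (x : ellOne) :
    ‖e.toContinuousLinearMap x‖ ≤ fwdNorm e * ‖x‖ :=
  ContinuousLinearMap.le_opNorm _ x

lemma norm_smul_dual (μ : ℂ) (x : StrongDual ℂ G) : ‖μ • x‖ = ‖μ‖ * ‖x‖ := norm_smul μ x

end OpNorms

set_option maxHeartbeats 2000000 in
set_option synthInstance.maxHeartbeats 200000 in
/-- Statement 14.  If `F` is a shift-invariant concrete predual of `ℓ₁(ℤ)` and `|λ| = 1`, then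
`λδ₀` is not in the `σ(ℓ₁(ℤ),F)`-closure of `{δ_n : n ∈ ℤ, n ≠ 0}`. -/
theorem statement_14 (F : Submodule ℂ ellInf)
    (hinv : zshift 1 '' (F : Set ellInf) = (F : Set ellInf))
    (hF : IsConcretePredual F) (lam : ℂ) (hlam : ‖lam‖ = 1) :
    lam • deltaZ 0 ∉
      @closure _ (weakStar F) {a : ellOne | ∃ n : ℤ, n ≠ 0 ∧ a = deltaZ n} := by
  
  intro hmem
  obtain ⟨hclosedF, e, he⟩ := hF
  haveI : TopologicalSpace.SeparableSpace ellOne := separableSpace_ellOne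
  classical
  set Φ : ellOne → WeakDual ℂ F := fun a => StrongDual.toWeakDual (e a) with hΦ
  set D : ℤ → WeakDual ℂ F := fun n => Φ (deltaZ n) with hD
  -- nonzero scalars
  have hlam0 : lam ≠ 0 := by
    intro h
    rw [h, norm_zero] at hlam
    exact zero_ne_one hlam
  -- the isomorphism constant
  set C : ℝ := symmNorm e + 1 with hC
  have hCpos : 0 < C := by have := symmNorm_nonneg e; linarith
  have hlow : ∀ a : ellOne, ‖a‖ ≤ C * ‖e a‖ := by
    intro a
    have h1 := le_symmNorm e (e a)
    have h0 : e.symm.toContinuousLinearMap (e a) = a := e.symm_apply_apply a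
    rw [h0] at h1
    nlinarith [norm_nonneg (e a)]
  -- transfer the hypothesis to the weak-* dual
  have hInd : @Topology.IsInducing ellOne (WeakDual ℂ F) (weakStar F) inferInstance Φ :=
    @Topology.IsInducing.mk ellOne (WeakDual ℂ F) (weakStar F) inferInstance Φ
      (weakStar_eq_induced e he)
  have htrans := @Topology.IsInducing.closure_eq_preimage_closure_image ellOne
    (WeakDual ℂ F) Φ inferInstance (weakStar F) hInd
    {a : ellOne | ∃ n : ℤ, n ≠ 0 ∧ a = deltaZ n}
  rw [htrans] at hmem
  have himg : Φ '' {a : ellOne | ∃ n : ℤ, n ≠ 0 ∧ a = deltaZ n}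
      = {ψ : WeakDual ℂ F | ∃ n : ℤ, n ≠ 0 ∧ ψ = D n} := by
    ext ψ
    constructor
    · rintro ⟨a, ⟨n, hn, rfl⟩, rfl⟩
      exact ⟨n, hn, rfl⟩
    · rintro ⟨n, hn, rfl⟩
      exact ⟨deltaZ n, ⟨n, hn, rfl⟩, rfl⟩
  have hΦsmul : ∀ (μ : ℂ) (a : ellOne), Φ (μ • a) = μ • Φ a := by
    intro μ a
    rw [hΦ]
    simp only [map_smul]
  have hmem2 : lam • D 0 ∈ closure {ψ : WeakDual ℂ F | ∃ n : ℤ, n ≠ 0 ∧ ψ = D n} := by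
    have h0 : Φ (lam • deltaZ 0) ∈ closure (Φ '' {a : ellOne | ∃ n : ℤ, n ≠ 0 ∧ a = deltaZ n}) :=
      hmem
    rw [himg] at h0
    rw [hΦsmul] at h0
    exact h0
  -- continuity of the scalar and shift maps on the weak-* dual
  have hMcont : ∀ μ : ℂ, Continuous (fun ψ : WeakDual ℂ F => μ • ψ) := by
    intro μ
    apply WeakDual.continuous_of_continuous_eval
    intro y
    exact (WeakDual.eval_continuous y).const_smul μ
  have hSkcont : ∀ k : ℤ, Continuous (fun ψ : WeakDual ℂ F =>
      StrongDual.toWeakDual ((WeakDual.toStrongDual ψ).comp (shiftF hinv k))) := by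
    intro k
    apply WeakDual.continuous_of_continuous_eval
    intro y
    exact WeakDual.eval_continuous (shiftF hinv k y)
  -- action of the shift maps on the point masses
  have hSkD : ∀ (k n : ℤ) (μ : ℂ),
      StrongDual.toWeakDual ((WeakDual.toStrongDual (μ • D n)).comp (shiftF hinv k))
        = μ • D (n - k) := by
    intro k n μ
    have h1 : WeakDual.toStrongDual (μ • D n) = μ • e (deltaZ n) := by
      rw [map_smul]
      rfl
    rw [h1]
    have h2 : (μ • e (deltaZ n)).comp (shiftF hinv k) = μ • e (deltaZ (n - k)) := by
      apply ContinuousLinearMap.ext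
      intro x
      rw [ContinuousLinearMap.comp_apply, ContinuousLinearMap.smul_apply,
        ContinuousLinearMap.smul_apply, e_deltaZ e he, e_deltaZ e he]
      rw [shiftF_apply, zshift_apply]
    rw [h2, map_smul]
  -- the norm-bounded set of unimodular multiples of point masses and its weak-* closure
  set T : Set (WeakDual ℂ F) := {ψ | ∃ (μ : ℂ) (n : ℤ), ‖μ‖ = 1 ∧ ψ = μ • D n} with hT
  set K : Set (WeakDual ℂ F) := closure T with hK
  set R : ℝ := fwdNorm e with hR
  have hTball : T ⊆ WeakDual.toStrongDual ⁻¹' Metric.closedBall 0 R := by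
    rintro ψ ⟨μ, n, hμ, rfl⟩
    simp only [Set.mem_preimage, Metric.mem_closedBall, dist_zero_right]
    have h1 : WeakDual.toStrongDual (μ • D n) = μ • e (deltaZ n) := by
      rw [map_smul]
      rfl
    rw [h1]
    refine (dist_zero_right (μ • e (deltaZ n))).trans_le ?_
    refine (norm_smul_dual μ (e (deltaZ n))).trans_le ?_
    rw [hμ, one_mul]
    have h6 := le_fwdNorm e (deltaZ n)
    rw [norm_deltaZ, mul_one] at h6
    exact h6
  have hKball : K ⊆ WeakDual.toStrongDual ⁻¹' Metric.closedBall 0 R :=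
    closure_minimal hTball (WeakDual.isClosed_closedBall 0 R)
  have hKcomp : IsCompact K :=
    (WeakDual.isCompact_closedBall (𝕜 := ℂ) (0 : StrongDual ℂ F) R).of_isClosed_subset
      isClosed_closure hKball
  have hKne : K.Nonempty := ⟨D 0, subset_closure ⟨1, 0, norm_one, (one_smul ℂ _).symm⟩⟩
  -- a dense sequence in the dual
  have hcdense : DenseRange (fun i : ℕ => e (TopologicalSpace.denseSeq ellOne i)) := by
    have h1 : DenseRange (TopologicalSpace.denseSeq ellOne) :=
      TopologicalSpace.denseRange_denseSeq _
    have h2 : Continuous (e : ellOne → StrongDual ℂ F) := e.continuous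
    have h3 : Function.Surjective (e : ellOne → StrongDual ℂ F) := e.surjective
    exact DenseRange.comp h3.denseRange h1 h2
  -- the Baire category argument
  have hε : (0 : ℝ) < 1 / (4 * C) := by positivity
  obtain ⟨V, hVopen, hVK, hdiam⟩ := exists_small_piece _ hcdense hKcomp hKne hε
  obtain ⟨κ, hκV, hκK⟩ := hVK
  have hκK' : κ ∈ closure T := hκK
  obtain ⟨τ, hτV, hτT⟩ := _root_.mem_closure_iff.1 hκK' V hVopen hκV
  obtain ⟨μ₀, n₀, hμ₀, rfl⟩ := hτT
  have hμ₀0 : μ₀ ≠ 0 := by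
    intro h
    rw [h, norm_zero] at hμ₀
    exact zero_ne_one hμ₀
  -- the continuous map sending `lam • D 0` to `μ₀ • D n₀` and `D n` to `(μ₀ lam⁻¹) • D (n + n₀)`
  set G : WeakDual ℂ F → WeakDual ℂ F := fun ψ => μ₀ •
    (StrongDual.toWeakDual ((WeakDual.toStrongDual (lam⁻¹ • ψ)).comp
      (shiftF hinv (-n₀)))) with hG
  have hGcont : Continuous G := by
    apply Continuous.comp (hMcont μ₀)
    exact (hSkcont (-n₀)).comp (hMcont lam⁻¹)
  have hGtau : G (lam • D 0) = μ₀ • D n₀ := by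
    have h1 : lam⁻¹ • (lam • D 0) = (1 : ℂ) • D 0 := by
      rw [smul_smul, inv_mul_cancel₀ hlam0]
    have h2 := hSkD (-n₀) 0 1
    have h3 : (0 : ℤ) - -n₀ = n₀ := by omega
    rw [hG]
    simp only
    rw [h1, h2, h3, one_smul]
  -- transport the closure hypothesis by `G`
  have hGim : G '' {ψ : WeakDual ℂ F | ∃ n : ℤ, n ≠ 0 ∧ ψ = D n}
      ⊆ {ψ : WeakDual ℂ F | ∃ n : ℤ, n ≠ 0 ∧ ψ = (μ₀ * lam⁻¹) • D (n + n₀)} := by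
    rintro _ ⟨ψ, ⟨n, hn, rfl⟩, rfl⟩
    refine ⟨n, hn, ?_⟩
    have h1 : lam⁻¹ • D n = lam⁻¹ • D n := rfl
    have h2 := hSkD (-n₀) n lam⁻¹
    have h3 : n - -n₀ = n + n₀ := by omega
    rw [hG]
    simp only
    rw [h2, h3, smul_smul]
  have hτmem : μ₀ • D n₀ ∈
      closure {ψ : WeakDual ℂ F | ∃ n : ℤ, n ≠ 0 ∧ ψ = (μ₀ * lam⁻¹) • D (n + n₀)} := by
    have h1 : G (lam • D 0) ∈ G '' closure {ψ : WeakDual ℂ F | ∃ n : ℤ, n ≠ 0 ∧ ψ = D n} :=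
      ⟨_, hmem2, rfl⟩
    have h2 := image_closure_subset_closure_image hGcont (s := {ψ : WeakDual ℂ F | ∃ n : ℤ, n ≠ 0 ∧ ψ = D n})
    have h3 := closure_mono hGim
    rw [hGtau] at h1
    exact h3 (h2 h1)
  -- a point mass multiple near `μ₀ • D n₀` inside `V`
  obtain ⟨ψ₁, hψ₁V, hψ₁S⟩ := _root_.mem_closure_iff.1 hτmem V hVopen hτV
  obtain ⟨n₁, hn₁, rfl⟩ := hψ₁S
  have hnorm₁ : ‖μ₀ * lam⁻¹‖ = 1 := by
    rw [norm_mul, norm_inv, hμ₀, hlam]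
    norm_num
  have hψ₁K : (μ₀ * lam⁻¹) • D (n₁ + n₀) ∈ K :=
    subset_closure ⟨μ₀ * lam⁻¹, n₁ + n₀, hnorm₁, rfl⟩
  have hτK : μ₀ • D n₀ ∈ K := subset_closure ⟨μ₀, n₀, hμ₀, rfl⟩
  -- the two points are `2ε`-close in the dual norm
  have hclose := hdiam (μ₀ • D n₀) ⟨hτV, hτK⟩ ((μ₀ * lam⁻¹) • D (n₁ + n₀)) ⟨hψ₁V, hψ₁K⟩
  -- but they are `1/C`-separated
  set b : ellOne := μ₀ • deltaZ n₀ - (μ₀ * lam⁻¹) • deltaZ (n₁ + n₀) with hb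
  have hbnd : WeakDual.toStrongDual (μ₀ • D n₀)
      - WeakDual.toStrongDual ((μ₀ * lam⁻¹) • D (n₁ + n₀)) = e b := by
    rw [hb, map_sub, map_smul, map_smul, map_smul, map_smul]
    rfl
  have hcoord : b n₀ = μ₀ := by
    have h1 : b n₀ = (μ₀ • deltaZ n₀) n₀ - ((μ₀ * lam⁻¹) • deltaZ (n₁ + n₀)) n₀ := by
      rw [hb, lp.coeFn_sub]
      rfl
    have h2 : (μ₀ • deltaZ n₀) n₀ = μ₀ * (deltaZ n₀) n₀ := by
      rw [lp.coeFn_smul]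
      rfl
    have h3 : ((μ₀ * lam⁻¹) • deltaZ (n₁ + n₀)) n₀ = (μ₀ * lam⁻¹) * (deltaZ (n₁ + n₀)) n₀ := by
      rw [lp.coeFn_smul]
      rfl
    have h4 : n₀ ≠ n₁ + n₀ := by omega
    rw [h1, h2, h3, deltaZ_apply_self, deltaZ_apply_ne h4, mul_one, mul_zero, sub_zero]
  have hblow : (1 : ℝ) ≤ ‖b‖ := by
    have h1 := lp.norm_apply_le_norm (E := fun _ : ℤ => ℂ) (p := 1) one_ne_zero b n₀
    rw [hcoord, hμ₀] at h1
    exact h1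
  have hbup : ‖b‖ ≤ C * (2 * (1 / (4 * C))) := by
    calc ‖b‖ ≤ C * ‖e b‖ := hlow b
      _ ≤ C * (2 * (1 / (4 * C))) := by
          apply mul_le_mul_of_nonneg_left _ hCpos.le
          rw [← hbnd]
          exact hclose
  have : (1 : ℝ) ≤ 1 / 2 := by
    have h2 : C * (2 * (1 / (4 * C))) = 1 / 2 := by
      field_simp
      ring
    rw [h2] at hbup
    exact le_trans hblow hbup
  linarith
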